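/- Trace equivalence does not preserve diamond convergence: there exists a finite LTS with states p, q that are trace equivalent (traces(p) = traces(q)) and a diamond ◇ = b¹ ∥ (a₁a₂)¹ such that p ◇-converges in some state but q does not ◇-converge in any state. -/

import Mathlib

/-- A sequence is non-monotone if it contains at least two distinct actions. -/
def NonMono {A : Type*} [DecidableEq A] (s : List A) : Prop := 2 ≤ s.toFinset.card

/-- A diamond pattern: finitely supported cardinality maps on actions and on
non-monotone action sequences. -/
structure Diamond (A : Type*) [DecidableEq A] where
  Ca : A →₀ ℕ
  Cs : List A →₀ ℕ
  nonmono : ∀ s ∈ Cs.support, NonMono s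

namespace Diamond

variable {A : Type*} [DecidableEq A]

/-- The empty diamond. -/
def emptyD : Diamond A := ⟨0, 0, by simp⟩

/-- The size of a diamond. -/
def size (d : Diamond A) : ℕ :=
  d.Ca.sum (fun _ n => n) + d.Cs.sum (fun s n => s.length * n)

/-- The head actions of a diamond. -/
def hdSet (d : Diamond A) : Set A :=
  {a | 0 < d.Ca a ∨ ∃ s : List A, 0 < d.Cs s ∧ s.head? = some a}

/-- Single-action tail operation on diamonds. -/
def tl (d : Diamond A) (a : A) : Set (Diamond A) :=
  {d' |
    (0 < d.Ca a ∧ d'.Ca = d.Ca.update a (d.Ca a - 1) ∧ d'.Cs = d.Cs)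
    ∨ (∃ s : List A, NonMono s ∧ 0 < d.Cs (a :: s) ∧ d'.Ca = d.Ca ∧
        d'.Cs = (d.Cs.update (a :: s) (d.Cs (a :: s) - 1)).update s (d.Cs s + 1))
    ∨ (∃ (b : A) (k : ℕ), 0 < k ∧ b ≠ a ∧ 0 < d.Cs (a :: List.replicate k b) ∧
        d'.Ca = d.Ca.update b (d.Ca b + k) ∧
        d'.Cs = d.Cs.update (a :: List.replicate k b) (d.Cs (a :: List.replicate k b) - 1))}

/-- Tail operation iterated over an action sequence. -/
def tlSeq (d : Diamond A) : List A → Set (Diamond A)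
  | [] => {d}
  | a :: s => ⋃ d' ∈ tl d a, tlSeq d' s

/-- `TlD d dpf r` : `r` is in the diamond-tail `tl(d, dpf)`. -/
inductive TlD : Diamond A → Diamond A → Diamond A → Prop
  | empty (d : Diamond A) : TlD d emptyD d
  | step {d dpf r : Diamond A} {a : A} {d' dpf' : Diamond A} :
      a ∈ hdSet dpf → d' ∈ tl d a → dpf' ∈ tl dpf a → TlD d' dpf' r → TlD d dpf r

/-- The prefix relation on diamonds: `dpf ⊑ d` iff `tl(d, dpf) ≠ ∅`. -/
def Prefix (dpf d : Diamond A) : Prop := ∃ r, TlD d dpf r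

/-- Sequence-of relation: `s` is an interleaving prefix of the diamond `d`. -/
inductive SeqOf : List A → Diamond A → Prop
  | nil (d : Diamond A) : SeqOf [] d
  | cons {a : A} {s : List A} {d d' : Diamond A} :
      d' ∈ tl d a → SeqOf s d' → SeqOf (a :: s) d

/-- The singleton diamond `a¹`. -/
noncomputable def singleD (a : A) : Diamond A := ⟨Finsupp.single a 1, 0, by simp⟩

end Diamond

section LTS

variable {Q A : Type*} [DecidableEq A]

/-- Transition relation extended to action sequences. -/
inductive TrSeq (Tr : Q → A → Q → Prop) : Q → List A → Q → Prop
  | nil (q : Q) : TrSeq Tr q [] q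
  | cons {q q' q'' : Q} {a : A} {s : List A} :
      Tr q a q' → TrSeq Tr q' s q'' → TrSeq Tr q (a :: s) q''

open Diamond in
/-- Fuel-indexed strict diamond convergence (the fuel is the diamond size;
every tail step decreases the size by exactly one). -/
def SConvF (Tr : Q → A → Q → Prop) (R : Q → Q → Prop) :
    ℕ → Diamond A → Q → Q → Prop
  | 0, d, q, q' => d = emptyD ∧ R q q'
  | n + 1, d, q, q' =>
    (d = emptyD ∧ R q q') ∨
    (d ≠ emptyD ∧
      (∀ a ∈ hdSet d, ∀ d' ∈ tl d a, ∃ p, Tr q a p ∧ SConvF Tr R n d' p q') ∧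
      (∀ (a : A) (p : Q), Tr q a p → ∃ d' ∈ tl d a, SConvF Tr R n d' p q'))

/-- Strict diamond convergence up to `R`: `SConv Tr R d q̂ q̌` means
`q̂ ⟹^d [q̌]_R`. -/
def SConv (Tr : Q → A → Q → Prop) (R : Q → Q → Prop)
    (d : Diamond A) (q q' : Q) : Prop :=
  SConvF Tr R d.size d q q'

open Diamond in
/-- (Non-strict) diamond convergence up to `R`: `Conv Tr R d q̂ q̌` means
`q̂ ⟶^d [q̌]_R`. -/
def Conv (Tr : Q → A → Q → Prop) (R : Q → Q → Prop)
    (d : Diamond A) (q q' : Q) : Prop :=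
  (d = emptyD ∧ R q q') ∨
  (d ≠ emptyD ∧ ∀ a ∈ hdSet d, ∀ d' ∈ tl d a, ∃ p, Tr q a p ∧ SConv Tr R d' p q')

end LTS

/-! ### Auxiliary constructions for the counterexample -/

open Diamond

abbrev Qw : Type := (Fin 2 × Fin 3) ⊕ Fin 3

def nextL : Qw → Fin 3 → List Qw
  | .inl (0, j), 2 => [.inl (1, j)]
  | .inl (i, 0), 0 => [.inl (i, 1)]
  | .inl (i, 1), 1 => [.inl (i, 2)]
  | .inr 0, 0 => [.inl (0, 1)]
  | .inr 0, 2 => [.inr 1]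
  | .inr 1, 0 => [.inl (1, 1), .inr 2]
  | _, _ => []

def TrW (x : Qw) (a : Fin 3) (y : Qw) : Prop := y ∈ nextL x a

instance decMem {α : Type} [DecidableEq α] (a : α) : (l : List α) → Decidable (a ∈ l)
  | [] => isFalse (by simp)
  | b :: t =>
    match decEq a b with
    | isTrue h => isTrue (h ▸ List.mem_cons_self)
    | isFalse h =>
      match decMem a t with
      | isTrue h2 => isTrue (List.mem_cons_of_mem _ h2)
      | isFalse h2 => isFalse (by simp [List.mem_cons, h, h2])

instance (x : Qw) (a : Fin 3) (y : Qw) : Decidable (TrW x a y) :=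
  inferInstanceAs (Decidable (y ∈ nextL x a))

/-! #### Diamonds -/

lemma dext {A : Type} [DecidableEq A] {d d' : Diamond A}
    (h1 : d.Ca = d'.Ca) (h2 : d.Cs = d'.Cs) : d = d' := by
  cases d; cases d'; simp_all

noncomputable def d0 : Diamond (Fin 3) :=
  ⟨Finsupp.single 2 1, Finsupp.single [0, 1] 1, by
    intro s hs
    rw [Finsupp.mem_support_single] at hs
    rw [hs.1]; exact (by decide : 2 ≤ ([0, 1] : List (Fin 3)).toFinset.card)⟩

noncomputable def d1 : Diamond (Fin 3) :=
  ⟨Finsupp.single 1 1 + Finsupp.single 2 1, 0, by simp⟩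

noncomputable def d2 : Diamond (Fin 3) :=
  ⟨0, Finsupp.single [0, 1] 1, by
    intro s hs
    rw [Finsupp.mem_support_single] at hs
    rw [hs.1]; exact (by decide : 2 ≤ ([0, 1] : List (Fin 3)).toFinset.card)⟩

noncomputable def e1 : Diamond (Fin 3) := ⟨Finsupp.single 1 1, 0, by simp⟩
noncomputable def e2 : Diamond (Fin 3) := ⟨Finsupp.single 2 1, 0, by simp⟩

lemma single_pos {α M : Type} [DecidableEq α] [AddCommMonoid M] [PartialOrder M] {x y : α} {n : M}
    (h : 0 < Finsupp.single x n y) : y = x := by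
  by_contra hne
  simp [Finsupp.single_apply, hne, Ne.symm hne] at h

lemma d0_ne : d0 ≠ emptyD := by
  intro h
  have := congrArg (fun d => d.Cs [0, 1]) h
  simp [d0, emptyD] at this

lemma d1_ne : d1 ≠ emptyD := by
  intro h
  have := congrArg (fun d => d.Ca 1) h
  simp [d1, emptyD, Finsupp.single_apply] at this

lemma d2_ne : d2 ≠ emptyD := by
  intro h
  have := congrArg (fun d => d.Cs [0, 1]) h
  simp [d2, emptyD] at this

lemma e1_ne : e1 ≠ emptyD := by
  intro h
  have := congrArg (fun d => d.Ca 1) h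
  simp [e1, emptyD] at this

lemma e2_ne : e2 ≠ emptyD := by
  intro h
  have := congrArg (fun d => d.Ca 2) h
  simp [e2, emptyD] at this

/-! #### head sets -/

lemma hd_d0 {a : Fin 3} : a ∈ hdSet d0 ↔ a = 0 ∨ a = 2 := by
  constructor
  · rintro (h | ⟨s, hs, hh⟩)
    · right; exact (single_pos h).symm ▸ rfl
    · left
      have := single_pos hs
      subst this
      simp at hh
      exact hh.symm
  · rintro (rfl | rfl)
    · exact Or.inr ⟨[0, 1], by simp [d0], rfl⟩
    · exact Or.inl (by simp [d0])

lemma hd_d1 {a : Fin 3} : a ∈ hdSet d1 ↔ a = 1 ∨ a = 2 := by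
  constructor
  · rintro (h | ⟨s, hs, hh⟩)
    · simp only [d1, Finsupp.add_apply, Finsupp.single_apply] at h
      fin_cases a <;> simp_all
    · simp [d1] at hs
  · rintro (rfl | rfl) <;> refine Or.inl ?_ <;>
      simp [d1, Finsupp.add_apply, Finsupp.single_apply]

lemma hd_d2 {a : Fin 3} : a ∈ hdSet d2 ↔ a = 0 := by
  constructor
  · rintro (h | ⟨s, hs, hh⟩)
    · simp [d2] at h
    · have := single_pos hs
      subst this
      simpa using hh.symm
  · rintro rfl
    exact Or.inr ⟨[0, 1], by simp [d2], rfl⟩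

lemma hd_e1 {a : Fin 3} : a ∈ hdSet e1 ↔ a = 1 := by
  constructor
  · rintro (h | ⟨s, hs, hh⟩)
    · exact (single_pos h)
    · simp [e1] at hs
  · rintro rfl
    exact Or.inl (by simp [e1])

lemma hd_e2 {a : Fin 3} : a ∈ hdSet e2 ↔ a = 2 := by
  constructor
  · rintro (h | ⟨s, hs, hh⟩)
    · exact (single_pos h)
    · simp [e2] at hs
  · rintro rfl
    exact Or.inl (by simp [e2])

/-! #### tail sets -/

lemma nm1 : ¬ NonMono [(1 : Fin 3)] := by
  intro h
  exact absurd h (by show ¬ (2 ≤ _); decide)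

lemma repl_eq {k : ℕ} {b : Fin 3} (h : List.replicate k b = [1]) : b = 1 ∧ k = 1 := by
  cases k with
  | zero => simp at h
  | succ k =>
    rw [List.replicate_succ] at h
    injection h with h1 h2
    simp only [List.replicate_eq_nil_iff] at h2
    exact ⟨h1, by omega⟩

lemma upd1 : (Finsupp.single (2:Fin 3) 1).update 1 ((Finsupp.single (2:Fin 3) 1) 1 + 1)
    = Finsupp.single (1:Fin 3) 1 + Finsupp.single 2 1 := by
  ext x
  fin_cases x <;>
    simp [Finsupp.coe_update, Function.update_apply, Finsupp.single_apply, Finsupp.add_apply]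

lemma upd2 : (Finsupp.single ([0,1] : List (Fin 3)) 1).update [0,1]
    ((Finsupp.single ([0,1] : List (Fin 3)) 1) [0,1] - 1) = 0 := by
  ext s
  by_cases h : s = [0, 1]
  · simp [Finsupp.coe_update, Function.update_apply, Finsupp.single_apply, h]
  · simp [Finsupp.coe_update, Function.update_apply, Finsupp.single_apply, h, Ne.symm h]

lemma upd3 : (Finsupp.single (1:Fin 3) 1 + Finsupp.single 2 1).update 1
    (((Finsupp.single (1:Fin 3) 1 + Finsupp.single 2 1 : Fin 3 →₀ ℕ)) 1 - 1) = Finsupp.single (2:Fin 3) 1 := by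
  ext x
  fin_cases x <;>
    simp [Finsupp.coe_update, Function.update_apply, Finsupp.single_apply, Finsupp.add_apply]

lemma upd4 : (Finsupp.single (1:Fin 3) 1 + Finsupp.single 2 1).update 2
    (((Finsupp.single (1:Fin 3) 1 + Finsupp.single 2 1 : Fin 3 →₀ ℕ)) 2 - 1) = Finsupp.single (1:Fin 3) 1 := by
  ext x
  fin_cases x <;>
    simp [Finsupp.coe_update, Function.update_apply, Finsupp.single_apply, Finsupp.add_apply]

lemma upd5 : ((0 : Fin 3 →₀ ℕ)).update 1 ((0 : Fin 3 →₀ ℕ) 1 + 1) = Finsupp.single (1:Fin 3) 1 := by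
  ext x
  fin_cases x <;>
    simp [Finsupp.coe_update, Function.update_apply, Finsupp.single_apply]

lemma upd6 : (Finsupp.single (1:Fin 3) 1).update 1 ((Finsupp.single (1:Fin 3) 1) 1 - 1) = 0 := by
  ext x
  fin_cases x <;>
    simp [Finsupp.coe_update, Function.update_apply, Finsupp.single_apply]

lemma upd7 : (Finsupp.single (2:Fin 3) 1).update 2 ((Finsupp.single (2:Fin 3) 1) 2 - 1) = 0 := by
  ext x
  fin_cases x <;>
    simp [Finsupp.coe_update, Function.update_apply, Finsupp.single_apply]

lemma tl_d0_0 {d' : Diamond (Fin 3)} : d' ∈ tl d0 0 ↔ d' = d1 := by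
  constructor
  · rintro (⟨h, -, -⟩ | ⟨s, hnm, hpos, -, -⟩ | ⟨b, k, hk, hb, hpos, hCa, hCs⟩)
    · exact absurd (single_pos (x := (2:Fin 3)) h) (by decide)
    · have h01 := single_pos (x := ([0,1] : List (Fin 3))) hpos
      injection h01 with _ h2
      subst h2
      exact absurd hnm nm1
    · have h01 := single_pos (x := ([0,1] : List (Fin 3))) hpos
      injection h01 with _ h2
      obtain ⟨rfl, rfl⟩ := repl_eq h2
      refine dext ?_ ?_
      · rw [hCa]; exact upd1 ▸ rfl
      · rw [hCs]; exact upd2 ▸ rfl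
  · rintro rfl
    refine Or.inr (Or.inr ⟨1, 1, one_pos, by decide, ?_, ?_, ?_⟩)
    · show 0 < Finsupp.single ([0,1] : List (Fin 3)) 1 [0, 1]
      simp
    · exact upd1.symm
    · exact upd2.symm

lemma tl_d0_2 {d' : Diamond (Fin 3)} : d' ∈ tl d0 2 ↔ d' = d2 := by
  constructor
  · rintro (⟨-, hCa, hCs⟩ | ⟨s, -, hpos, -, -⟩ | ⟨b, k, -, -, hpos, -, -⟩)
    · refine dext ?_ ?_
      · rw [hCa]; exact upd7 ▸ rfl
      · rw [hCs]; rfl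
    · have := single_pos (x := ([0,1] : List (Fin 3))) hpos
      simp at this
    · have := single_pos (x := ([0,1] : List (Fin 3))) hpos
      simp at this
  · rintro rfl
    exact Or.inl ⟨by simp [d0], upd7.symm, rfl⟩

lemma tl_d1_1 {d' : Diamond (Fin 3)} : d' ∈ tl d1 1 ↔ d' = e2 := by
  constructor
  · rintro (⟨-, hCa, hCs⟩ | ⟨s, -, hpos, -, -⟩ | ⟨b, k, -, -, hpos, -, -⟩)
    · exact dext (by rw [hCa]; exact upd3 ▸ rfl) (by rw [hCs]; rfl)
    · simp [d1] at hpos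
    · simp [d1] at hpos
  · rintro rfl
    refine Or.inl ⟨?_, upd3.symm, rfl⟩
    show 0 < ((Finsupp.single (1:Fin 3) 1 + Finsupp.single 2 1 : Fin 3 →₀ ℕ)) 1
    simp [Finsupp.add_apply, Finsupp.single_apply]

lemma tl_d1_2 {d' : Diamond (Fin 3)} : d' ∈ tl d1 2 ↔ d' = e1 := by
  constructor
  · rintro (⟨-, hCa, hCs⟩ | ⟨s, -, hpos, -, -⟩ | ⟨b, k, -, -, hpos, -, -⟩)
    · exact dext (by rw [hCa]; exact upd4 ▸ rfl) (by rw [hCs]; rfl)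
    · simp [d1] at hpos
    · simp [d1] at hpos
  · rintro rfl
    refine Or.inl ⟨?_, upd4.symm, rfl⟩
    show 0 < ((Finsupp.single (1:Fin 3) 1 + Finsupp.single 2 1 : Fin 3 →₀ ℕ)) 2
    simp [Finsupp.add_apply, Finsupp.single_apply]

lemma tl_d2_0 {d' : Diamond (Fin 3)} : d' ∈ tl d2 0 ↔ d' = e1 := by
  constructor
  · rintro (⟨h, -, -⟩ | ⟨s, hnm, hpos, -, -⟩ | ⟨b, k, hk, hb, hpos, hCa, hCs⟩)
    · simp [d2] at h
    · have h01 := single_pos (x := ([0,1] : List (Fin 3))) hpos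
      injection h01 with _ h2
      subst h2
      exact absurd hnm nm1
    · have h01 := single_pos (x := ([0,1] : List (Fin 3))) hpos
      injection h01 with _ h2
      obtain ⟨rfl, rfl⟩ := repl_eq h2
      refine dext ?_ ?_
      · rw [hCa]; exact upd5 ▸ rfl
      · rw [hCs]; exact upd2 ▸ rfl
  · rintro rfl
    refine Or.inr (Or.inr ⟨1, 1, one_pos, by decide, ?_, ?_, ?_⟩)
    · show 0 < Finsupp.single ([0,1] : List (Fin 3)) 1 [0, 1]
      simp
    · exact upd5.symm
    · exact upd2.symm

lemma tl_e1_1 {d' : Diamond (Fin 3)} : d' ∈ tl e1 1 ↔ d' = emptyD := by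
  constructor
  · rintro (⟨-, hCa, hCs⟩ | ⟨s, -, hpos, -, -⟩ | ⟨b, k, -, -, hpos, -, -⟩)
    · exact dext (by rw [hCa]; exact upd6 ▸ rfl) (by rw [hCs]; rfl)
    · simp [e1] at hpos
    · simp [e1] at hpos
  · rintro rfl
    exact Or.inl ⟨by simp [e1], upd6.symm, rfl⟩

lemma tl_e2_2 {d' : Diamond (Fin 3)} : d' ∈ tl e2 2 ↔ d' = emptyD := by
  constructor
  · rintro (⟨-, hCa, hCs⟩ | ⟨s, -, hpos, -, -⟩ | ⟨b, k, -, -, hpos, -, -⟩)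
    · exact dext (by rw [hCa]; exact upd7 ▸ rfl) (by rw [hCs]; rfl)
    · simp [e2] at hpos
    · simp [e2] at hpos
  · rintro rfl
    exact Or.inl ⟨by simp [e2], upd7.symm, rfl⟩

/-! #### sizes -/

lemma size_d1 : d1.size = 2 := by
  simp [d1, size, Finsupp.sum_add_index', Finsupp.sum_single_index, Finsupp.sum_zero_index]

lemma size_d2 : d2.size = 2 := by
  simp [d2, size, Finsupp.sum_single_index, Finsupp.sum_zero_index]

lemma size_e1 : e1.size = 1 := by
  simp [e1, size, Finsupp.sum_single_index, Finsupp.sum_zero_index]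

lemma size_e2 : e2.size = 1 := by
  simp [e2, size, Finsupp.sum_single_index, Finsupp.sum_zero_index]

/-! #### transitions -/

lemma tr01 : ∀ (a : Fin 3) (p : Qw), TrW (.inl (0,1)) a p →
    (a = 1 ∧ p = .inl (0,2)) ∨ (a = 2 ∧ p = .inl (1,1)) := by decide

lemma tr02 : ∀ (a : Fin 3) (p : Qw), TrW (.inl (0,2)) a p → (a = 2 ∧ p = .inl (1,2)) := by decide

lemma tr10 : ∀ (a : Fin 3) (p : Qw), TrW (.inl (1,0)) a p → (a = 0 ∧ p = .inl (1,1)) := by decide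

lemma tr11 : ∀ (a : Fin 3) (p : Qw), TrW (.inl (1,1)) a p → (a = 1 ∧ p = .inl (1,2)) := by decide

lemma trr1 : ∀ (a : Fin 3) (p : Qw), TrW (.inr 1) a p →
    (a = 0 ∧ (p = .inl (1,1) ∨ p = .inr 2)) := by decide

lemma trr0 : ∀ (a : Fin 3) (p : Qw), TrW (.inr 0) a p →
    (a = 0 ∧ p = .inl (0,1)) ∨ (a = 2 ∧ p = .inr 1) := by decide

lemma trr2 : ∀ (a : Fin 3) (p : Qw), ¬ TrW (.inr 2) a p := by decide

/-! #### strict convergence facts -/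

lemma scF_e1 : SConvF TrW Eq 1 e1 (.inl (1,1)) (.inl (1,2)) := by
  refine Or.inr ⟨e1_ne, ?_, ?_⟩
  · intro a ha d' hd'
    rw [hd_e1] at ha; subst ha
    rw [tl_e1_1] at hd'; subst hd'
    exact ⟨.inl (1,2), by decide, rfl, rfl⟩
  · intro a p hp
    obtain ⟨rfl, rfl⟩ := tr11 _ _ hp
    exact ⟨emptyD, tl_e1_1.mpr rfl, rfl, rfl⟩

lemma scF_e2 : SConvF TrW Eq 1 e2 (.inl (0,2)) (.inl (1,2)) := by
  refine Or.inr ⟨e2_ne, ?_, ?_⟩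
  · intro a ha d' hd'
    rw [hd_e2] at ha; subst ha
    rw [tl_e2_2] at hd'; subst hd'
    exact ⟨.inl (1,2), by decide, rfl, rfl⟩
  · intro a p hp
    obtain ⟨rfl, rfl⟩ := tr02 _ _ hp
    exact ⟨emptyD, tl_e2_2.mpr rfl, rfl, rfl⟩

lemma scF_d1 : SConvF TrW Eq 2 d1 (.inl (0,1)) (.inl (1,2)) := by
  refine Or.inr ⟨d1_ne, ?_, ?_⟩
  · intro a ha d' hd'
    rcases hd_d1.mp ha with rfl | rfl
    · rw [tl_d1_1] at hd'; subst hd'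
      exact ⟨.inl (0,2), by decide, scF_e2⟩
    · rw [tl_d1_2] at hd'; subst hd'
      exact ⟨.inl (1,1), by decide, scF_e1⟩
  · intro a p hp
    rcases tr01 _ _ hp with ⟨rfl, rfl⟩ | ⟨rfl, rfl⟩
    · exact ⟨e2, tl_d1_1.mpr rfl, scF_e2⟩
    · exact ⟨e1, tl_d1_2.mpr rfl, scF_e1⟩

lemma scF_d2 : SConvF TrW Eq 2 d2 (.inl (1,0)) (.inl (1,2)) := by
  refine Or.inr ⟨d2_ne, ?_, ?_⟩
  · intro a ha d' hd'
    rw [hd_d2] at ha; subst ha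
    rw [tl_d2_0] at hd'; subst hd'
    exact ⟨.inl (1,1), by decide, scF_e1⟩
  · intro a p hp
    obtain ⟨rfl, rfl⟩ := tr10 _ _ hp
    exact ⟨e1, tl_d2_0.mpr rfl, scF_e1⟩

/-! #### convergence of p -/

lemma conv_p : Conv TrW Eq d0 (.inl (0,0)) (.inl (1,2)) := by
  refine Or.inr ⟨d0_ne, ?_⟩
  intro a ha d' hd'
  rcases hd_d0.mp ha with rfl | rfl
  · rw [tl_d0_0] at hd'; subst hd'
    refine ⟨.inl (0,1), by decide, ?_⟩
    rw [SConv, size_d1]; exact scF_d1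
  · rw [tl_d0_2] at hd'; subst hd'
    refine ⟨.inl (1,0), by decide, ?_⟩
    rw [SConv, size_d2]; exact scF_d2

/-! #### non-convergence of q -/

lemma nconv_q : ¬ ∃ c, Conv TrW Eq d0 (.inr 0) c := by
  rintro ⟨c, h | ⟨-, h⟩⟩
  · exact d0_ne h.1
  · obtain ⟨p, hp, hsc⟩ := h 2 (hd_d0.mpr (Or.inr rfl)) d2 (tl_d0_2.mpr rfl)
    rcases trr0 _ _ hp with ⟨h, -⟩ | ⟨-, rfl⟩
    · exact absurd h (by decide)
    rw [SConv, size_d2] at hsc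
    rcases hsc with ⟨he, -⟩ | ⟨-, -, hstr⟩
    · exact d2_ne he
    · obtain ⟨d', hd', hs⟩ := hstr 0 (.inr 2) (by decide)
      rw [tl_d2_0] at hd'; subst hd'
      rcases hs with ⟨he, -⟩ | ⟨-, hfwd, -⟩
      · exact e1_ne he
      · obtain ⟨p', hp', -⟩ := hfwd 1 (hd_e1.mpr rfl) emptyD (tl_e1_1.mpr rfl)
        exact trr2 _ _ hp'

/-! #### trace equivalence -/

def stepS (S : List Qw) (a : Fin 3) : List Qw := S.flatMap (fun x => nextL x a)

lemma mem_stepS {S : List Qw} {a : Fin 3} {y : Qw} :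
    y ∈ stepS S a ↔ ∃ x ∈ S, TrW x a y := by
  simp [stepS, List.mem_flatMap, TrW]

def accS (S : List Qw) : List (Fin 3) → Bool
  | [] => !S.isEmpty
  | a :: s => accS (stepS S a) s

lemma accA : ∀ (s : List (Fin 3)) (S : List Qw),
    (∃ x ∈ S, ∃ r, TrSeq TrW x s r) ↔ accS S s = true := by
  intro s
  induction s with
  | nil =>
    intro S
    constructor
    · rintro ⟨x, hx, -⟩
      simp [accS, List.isEmpty_iff]
      rintro rfl; simp at hx
    · intro h
      simp [accS, List.isEmpty_iff] at h
      rcases List.exists_mem_of_ne_nil S h with ⟨x, hx⟩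
      exact ⟨x, hx, x, .nil x⟩
  | cons a s ih =>
    intro S
    rw [show accS S (a :: s) = accS (stepS S a) s from rfl, ← ih]
    constructor
    · rintro ⟨x, hx, r, hr⟩
      rcases hr with _ | ⟨h1, h2⟩
      exact ⟨_, mem_stepS.2 ⟨x, hx, h1⟩, _, h2⟩
    · rintro ⟨y, hy, r, hr⟩
      rcases mem_stepS.1 hy with ⟨x, hx, hxy⟩
      exact ⟨x, hx, r, .cons hxy hr⟩

def memB {α : Type} [DecidableEq α] (a : α) : List α → Bool
  | [] => false
  | b :: t => decide (a = b) || memB a t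

lemma memB_iff {α : Type} [DecidableEq α] {a : α} {l : List α} : memB a l = true ↔ a ∈ l := by
  induction l with
  | nil => simp [memB]
  | cons b t ih => simp [memB, ih, List.mem_cons]

def relR : List (List Qw × List Qw) :=
  [([.inl (0, 0)], [.inr 0]),
   ([.inl (0, 1)], [.inl (0, 1)]),
   ([], []),
   ([.inl (1, 0)], [.inr 1]),
   ([.inl (0, 2)], [.inl (0, 2)]),
   ([.inl (1, 1)], [.inl (1, 1)]),
   ([.inl (1, 1)], [.inl (1, 1), .inr 2]),
   ([.inl (1, 2)], [.inl (1, 2)])]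

lemma relR_closedB : relR.all (fun p => (p.1.isEmpty == p.2.isEmpty) &&
    (List.finRange 3).all (fun a => memB (stepS p.1 a, stepS p.2 a) relR)) = true := by
  decide

lemma relR_closed : ∀ p ∈ relR,
    (p.1.isEmpty = p.2.isEmpty) ∧ ∀ a : Fin 3, (stepS p.1 a, stepS p.2 a) ∈ relR := by
  intro p hp
  have h := List.all_eq_true.mp relR_closedB p hp
  simp only [Bool.and_eq_true, beq_iff_eq, List.all_eq_true] at h
  exact ⟨h.1, fun a => memB_iff.mp (h.2 a (List.mem_finRange a))⟩

lemma bisim : ∀ (s : List (Fin 3)) (p : List Qw × List Qw), p ∈ relR →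
    accS p.1 s = accS p.2 s := by
  intro s
  induction s with
  | nil => intro p hp; simp [accS, (relR_closed p hp).1]
  | cons a s ih =>
    intro p hp
    exact ih (stepS p.1 a, stepS p.2 a) ((relR_closed p hp).2 a)

lemma traceEq (s : List (Fin 3)) :
    (∃ r, TrSeq TrW (.inl (0,0)) s r) ↔ (∃ r, TrSeq TrW (.inr 0) s r) := by
  have h1 := accA s [.inl (0,0)]
  have h2 := accA s [.inr 0]
  have hb := bisim s ([.inl (0,0)], [.inr 0]) (by simp [relR])
  simp only [List.mem_singleton] at h1 h2
  constructor
  · intro h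
    have := h1.1 ⟨_, rfl, h⟩
    rcases h2.2 (by rw [← hb]; exact this) with ⟨x, rfl, hx⟩
    exact hx
  · intro h
    have := h2.1 ⟨_, rfl, h⟩
    rcases h1.2 (by rw [hb]; exact this) with ⟨x, rfl, hx⟩
    exact hx

open Diamond in
theorem stmt11 :
    ∃ (Q : Type) (_ : Finite Q) (Tr : Q → Fin 3 → Q → Prop) (p q : Q)
      (d : Diamond (Fin 3)),
      d.Ca = Finsupp.single (2 : Fin 3) 1 ∧
      d.Cs = Finsupp.single [(0 : Fin 3), 1] 1 ∧
      (∀ s : List (Fin 3), (∃ r, TrSeq Tr p s r) ↔ (∃ r, TrSeq Tr q s r)) ∧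
      (∃ c, Conv Tr Eq d p c) ∧ ¬ (∃ c, Conv Tr Eq d q c) :=
  ⟨Qw, inferInstance, TrW, .inl (0,0), .inr 0, d0, rfl, rfl, traceEq, ⟨_, conv_p⟩, nconv_q⟩
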